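/- The kernel of the reduction homomorphism GL_n(ℤ) → GL_n(ℤ/3ℤ) is torsion free; that is, if A is an integer matrix invertible over ℤ which is congruent to the identity matrix modulo 3 and A^k = I for some k ≥ 1, then A = I. -/

import Mathlib

open Finset

private lemma pow_entry_dvd {n : ℕ} (B : Matrix (Fin n) (Fin n) ℤ) (d : ℤ)
    (h : ∀ i j, d ∣ B i j) : ∀ t i j, d ^ (t + 1) ∣ (B ^ (t + 1)) i j := by
  intro t
  induction t with
  | zero => simpa using h
  | succ t ih =>
    intro i j
    rw [pow_succ B (t+1), Matrix.mul_apply, pow_succ d (t+1)]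
    exact Finset.dvd_sum fun l _ => mul_dvd_mul (ih i l) (h l j)

private lemma cast_entry {n : ℕ} (B : Matrix (Fin n) (Fin n) ℤ) (c : ℕ) (i j : Fin n) :
    (B * ((c : ℕ) : Matrix (Fin n) (Fin n) ℤ)) i j = (c : ℤ) * B i j := by
  rw [← (Nat.cast_commute c B).eq, ← nsmul_eq_mul]
  simp [Matrix.smul_apply]

private lemma key_lemma {n : ℕ} (B : Matrix (Fin n) (Fin n) ℤ) (p m : ℕ) (hp : p.Prime)
    (hm : 1 ≤ m) (h : ∀ i j, (3:ℤ)^m ∣ B i j) (hBp : (B + 1)^p = 1) :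
    ∀ i j, (3:ℤ)^(m+1) ∣ B i j := by
  obtain ⟨q, hq⟩ : ∃ q, p = q + 2 := ⟨p - 2, by have := hp.two_le; omega⟩
  have hexp := (Commute.one_right B).add_pow p
  simp only [one_pow, mul_one] at hexp
  rw [hBp, hq] at hexp
  rw [Finset.sum_range_succ', Finset.sum_range_succ'] at hexp
  simp only [pow_zero, Nat.choose_zero_right, Nat.cast_one, mul_one, pow_one,
    Nat.choose_one_right] at hexp
  set S : Matrix (Fin n) (Fin n) ℤ :=
    ∑ i ∈ range (q + 1), B ^ (i + 1 + 1) * (((q + 2).choose (i + 1 + 1) : ℕ) :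
      Matrix (Fin n) (Fin n) ℤ) with hS
  have h0 : S + B ^ (0+1) * (((q+2).choose (0+1) : ℕ) : Matrix (Fin n) (Fin n) ℤ) = 0 := by
    have := hexp.symm
    rwa [add_eq_right] at this
  have heq : B * (((q + 2 : ℕ)) : Matrix (Fin n) (Fin n) ℤ) = -S := by
    have h1 : B ^ (0+1) * (((q+2).choose (0+1) : ℕ) : Matrix (Fin n) (Fin n) ℤ) = -S :=
      eq_neg_of_add_eq_zero_right h0
    simpa using h1
  intro i j
  have hBmul : ((q + 2 : ℕ) : ℤ) * B i j =
      -(∑ x ∈ range (q+1), (((q+2).choose (x+1+1) : ℕ) : ℤ) * (B ^ (x+1+1)) i j) := by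
    have hc := congrArg (fun M : Matrix (Fin n) (Fin n) ℤ => M i j) heq
    simp only [Matrix.neg_apply, Matrix.sum_apply] at hc
    rw [hS] at hc
    simp only [Matrix.sum_apply, cast_entry] at hc
    exact hc
  -- every term of the sum is divisible by 3^(2m)
  have hterm : ∀ x, (3:ℤ)^(2*m) ∣ (B ^ (x+1+1)) i j := by
    intro x
    have h1 : ((3:ℤ)^m) ^ (x+1+1) ∣ (B ^ (x+1+1)) i j := pow_entry_dvd B _ h (x+1) i j
    refine dvd_trans ?_ h1
    rw [← pow_mul]
    exact pow_dvd_pow 3 (by nlinarith)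
  have hSdvd : (3:ℤ)^(2*m) ∣ ((q + 2 : ℕ) : ℤ) * B i j := by
    rw [hBmul]
    exact dvd_neg.mpr (Finset.dvd_sum fun x _ => Dvd.dvd.mul_left (hterm x) _)
  by_cases h3 : p = 3
  · -- p = 3, q = 1 : terms are choose 3 2 • B^2 and choose 3 3 • B^3
    have hq1 : q = 1 := by omega
    subst hq1
    have hBmul3 : (3:ℤ) * B i j = -((3:ℤ) * (B^2) i j + (B^3) i j) := by
      have h' := hBmul
      rw [Finset.sum_range_succ, Finset.sum_range_succ, Finset.sum_range_zero] at h'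
      norm_num at h'
      linarith
    have hd2 : (3:ℤ)^(2*m+1) ∣ (3:ℤ) * B i j := by
      rw [hBmul3]
      refine dvd_neg.mpr (dvd_add ?_ ?_)
      · have h33 : (3:ℤ)^(2*m+1) = 3 * 3^(2*m) := by ring
        rw [h33]
        exact mul_dvd_mul_left 3 (by simpa using hterm 0)
      · refine dvd_trans (pow_dvd_pow 3 (by omega : 2*m+1 ≤ 3*m)) ?_
        have := pow_entry_dvd B ((3:ℤ)^m) h 2 i j
        rwa [← pow_mul, mul_comm m 3] at this
    have hB2m : (3:ℤ)^(2*m) ∣ B i j := by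
      have h33 : (3:ℤ)^(2*m+1) = 3 * 3^(2*m) := by rw [pow_succ]; ring
      rw [h33] at hd2
      exact (mul_dvd_mul_iff_left (by norm_num : (3:ℤ) ≠ 0)).mp hd2
    exact dvd_trans (pow_dvd_pow 3 (by omega)) hB2m
  · -- p ≠ 3 : p is coprime to 3
    have hcop : IsCoprime ((3:ℤ)^(m+1)) (((q+2:ℕ)) : ℤ) := by
      refine IsCoprime.pow_left ?_
      rw [Int.isCoprime_iff_gcd_eq_one]
      have : Nat.Coprime 3 (q+2) := (Nat.coprime_primes (by norm_num) (hq ▸ hp)).mpr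
        (by omega)
      simpa [Int.gcd, show ((q:ℤ)+2).natAbs = q+2 by omega, Nat.coprime_iff_gcd_eq_one] using this
    have hdvd : (3:ℤ)^(m+1) ∣ ((q + 2 : ℕ) : ℤ) * B i j :=
      dvd_trans (pow_dvd_pow 3 (by omega)) hSdvd
    exact hcop.dvd_of_dvd_mul_left hdvd

private lemma prime_case {n : ℕ} (A : Matrix (Fin n) (Fin n) ℤ)
    (hmod : A.map (Int.cast : ℤ → ZMod 3) = 1)
    (p : ℕ) (hp : p.Prime) (hAp : A ^ p = 1) : A = 1 := by
  set B := A - 1 with hB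
  have hA1 : A = B + 1 := by rw [hB]; abel
  have hB1 : ∀ i j, (3:ℤ)^1 ∣ B i j := by
    intro i j
    have h1 : ((A i j : ℤ) : ZMod 3) = (1 : Matrix (Fin n) (Fin n) (ZMod 3)) i j := by
      rw [← hmod]; simp [Matrix.map_apply]
    have h2 : ((B i j : ℤ) : ZMod 3) = 0 := by
      rw [hB]
      simp only [Matrix.sub_apply]
      push_cast
      rw [h1]
      by_cases hij : i = j <;> simp [Matrix.one_apply, hij]
    rw [pow_one]
    exact_mod_cast (ZMod.intCast_zmod_eq_zero_iff_dvd _ 3).mp h2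
  have hall : ∀ m, ∀ i j, (3:ℤ)^(m+1) ∣ B i j := by
    intro m
    induction m with
    | zero => simpa using hB1
    | succ m ih =>
      exact key_lemma B p (m+1) hp (by omega) ih (by rw [← hA1]; exact hAp)
  have hB0 : B = 0 := by
    ext i j
    simp only [Matrix.zero_apply]
    by_contra hne
    set N := (B i j).natAbs with hN
    have hpos : 0 < |B i j| := abs_pos.mpr hne
    have hle : (3:ℤ)^(N+1) ≤ |B i j| := Int.le_of_dvd hpos ((dvd_abs _ _).mpr (hall N i j))
    have habs : |B i j| = (N : ℤ) := Int.abs_eq_natAbs _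
    have hlt : (N : ℤ) < 3^(N+1) := by
      have h1 : N < 3^N := Nat.lt_pow_self (by norm_num : 1 < 3)
      have h2 : (3:ℕ)^N ≤ 3^(N+1) := Nat.pow_le_pow_right (by norm_num) (by omega)
      exact_mod_cast lt_of_lt_of_le h1 h2
    linarith [hle, hlt, habs.symm.le, habs.ge, habs.le]
  rw [hA1, hB0, zero_add]

theorem kernel_GL_mod3_torsionFree (n : ℕ) (A : Matrix (Fin n) (Fin n) ℤ)
    (hA : IsUnit A) (hmod : A.map (Int.cast : ℤ → ZMod 3) = 1)
    (k : ℕ) (hk : 1 ≤ k) (hAk : A ^ k = 1) : A = 1 := by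
  clear hA
  induction k using Nat.strong_induction_on generalizing A with
  | _ k ih =>
    rcases eq_or_lt_of_le hk with h1 | h2
    · rw [← h1] at hAk; simpa using hAk
    · have hk1 : k ≠ 1 := by omega
      set p := k.minFac with hp'
      have hp : p.Prime := Nat.minFac_prime hk1
      have hdvd : p ∣ k := Nat.minFac_dvd k
      set r := k / p with hr'
      have hrp : r * p = k := Nat.div_mul_cancel hdvd
      have hr1 : 1 ≤ r := by
        have h5 : r ≠ 0 := by intro h0; rw [h0, zero_mul] at hrp; omega
        exact Nat.one_le_iff_ne_zero.mpr h5
      have hmap : (A ^ r).map (Int.cast : ℤ → ZMod 3) = 1 := by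
        have : (Int.castRingHom (ZMod 3)).mapMatrix (A ^ r) =
            ((Int.castRingHom (ZMod 3)).mapMatrix A) ^ r := map_pow _ A r
        simp only [RingHom.mapMatrix_apply, Int.coe_castRingHom] at this
        rw [this, hmod, one_pow]
      have hAr : (A ^ r) ^ p = 1 := by rw [← pow_mul, hrp, hAk]
      have hA'1 : A ^ r = 1 := prime_case (A ^ r) hmap p hp hAr
      have hrk : r < k := Nat.div_lt_self (by omega) hp.one_lt
      exact ih r hrk A hmod hr1 hA'1
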